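/- Fix k ∈ ℕ, k ≥ 1, and a node x of a locally finite graph G. Let G' be obtained from G by inserting bonds between arbitrarily many pairs of nodes (y,z) with d_G(y,z) ≤ k. Then the lower and upper internal scaling dimensions at x are unchanged: liminf_n ln|U'_n(x)|/ln(n) = liminf_n ln|U_n(x)|/ln(n), and likewise for limsup. -/

import Mathlib

open Filter Topology

/-- The metric ball of radius `n` around `x` in the graph `G`. -/
noncomputable def gball {V : Type*} (G : SimpleGraph V) (x : V) (n : ℕ) : Set V :=
  {z | G.edist x z ≤ n}

/-- The boundary sphere of radius `n` around `x` in the graph `G`. -/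
noncomputable def gsphere {V : Type*} (G : SimpleGraph V) (x : V) : ℕ → Set V
  | 0 => {x}
  | n + 1 => gball G x (n + 1) \ gball G x n


private lemma myle_of_forall_pos_le_add {x y : ℝ} (h : ∀ ε : ℝ, 0 < ε → x ≤ y + ε) : x ≤ y := by
  by_contra hc
  push_neg at hc
  have := h ((x - y)/2) (by linarith)
  linarith

private lemma lognat_nonneg (n : ℕ) : 0 ≤ Real.log n := by
  rcases Nat.eq_zero_or_pos n with h | h
  · simp [h]
  · exact Real.log_natCast_nonneg n

private lemma scaling_key (a b : ℕ → ℝ) (k : ℕ) (hk : 1 ≤ k)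
    (ha0 : ∀ n, 0 ≤ a n) (hmono : Monotone a)
    (hab : ∀ n, a n ≤ b n) (hbak : ∀ n, b n ≤ a (k * n)) :
    liminf (fun n : ℕ => b n / Real.log n) atTop = liminf (fun n : ℕ => a n / Real.log n) atTop ∧
    limsup (fun n : ℕ => b n / Real.log n) atTop = limsup (fun n : ℕ => a n / Real.log n) atTop := by
  have hf0 : ∀ n : ℕ, 0 ≤ a n / Real.log n := fun n => div_nonneg (ha0 n) (lognat_nonneg n)
  have hg0 : ∀ n : ℕ, 0 ≤ b n / Real.log n :=
    fun n => div_nonneg ((ha0 n).trans (hab n)) (lognat_nonneg n)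
  have hfg : ∀ n : ℕ, a n / Real.log n ≤ b n / Real.log n := by
    intro n
    rcases (lognat_nonneg n).eq_or_lt with h | h
    · rw [← h, div_zero, div_zero]
    · exact (div_le_div_iff_of_pos_right h).2 (hab n)
  have hklog : Tendsto (fun n : ℕ => Real.log n) atTop atTop :=
    Real.tendsto_log_atTop.comp tendsto_natCast_atTop_atTop
  constructor
  · -- liminf
    by_cases hT : Tendsto (fun n : ℕ => a n / Real.log n) atTop atTop
    · have hTg : Tendsto (fun n : ℕ => b n / Real.log n) atTop atTop :=
        tendsto_atTop_mono hfg hT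
      rw [liminf_eq, liminf_eq]
      congr 1
      ext c
      simp only [Set.mem_setOf_eq]
      exact ⟨fun _ => hT.eventually_ge_atTop c, fun _ => hTg.eventually_ge_atTop c⟩
    · rw [tendsto_atTop] at hT
      push_neg at hT
      obtain ⟨M, hM⟩ := hT
      have hfreqM : ∃ᶠ n in atTop, a n / Real.log n ≤ M :=
        hM.mono fun n h => le_of_lt h
      have hcb : IsCoboundedUnder (· ≥ ·) atTop (fun n : ℕ => a n / Real.log n) :=
        IsCoboundedUnder.of_frequently_le hfreqM
      have hbddf : IsBoundedUnder (· ≥ ·) atTop (fun n : ℕ => a n / Real.log n) :=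
        isBoundedUnder_of_eventually_ge (Eventually.of_forall hf0)
      have hbddg : IsBoundedUnder (· ≥ ·) atTop (fun n : ℕ => b n / Real.log n) :=
        isBoundedUnder_of_eventually_ge (Eventually.of_forall hg0)
      set L := liminf (fun n : ℕ => a n / Real.log n) atTop with hLdef
      have hL0 : 0 ≤ L := le_liminf_of_le hcb (Eventually.of_forall hf0)
      have hfreq' : ∀ ε : ℝ, 0 < ε → ∃ᶠ m in atTop, b m / Real.log m ≤ L + ε := by
        intro ε hε
        have hfreq : ∃ᶠ n in atTop, a n / Real.log n < L + ε / 2 :=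
          frequently_lt_of_liminf_lt hcb (by linarith)
        have hev1 : ∀ᶠ n : ℕ in atTop,
            (L + ε) * Real.log (2 * (k : ℝ)) ≤ (ε / 2) * Real.log n := by
          filter_upwards [hklog.eventually_ge_atTop
            ((L + ε) * Real.log (2 * (k : ℝ)) / (ε / 2))] with n hn
          have h2 : (ε / 2) * ((L + ε) * Real.log (2 * (k : ℝ)) / (ε / 2)) ≤
              (ε / 2) * Real.log n := mul_le_mul_of_nonneg_left hn (by linarith)
          rwa [mul_comm (ε / 2), div_mul_cancel₀ _ (by linarith : ε / 2 ≠ 0)] at h2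
        have hcomb := hfreq.and_eventually (hev1.and (eventually_ge_atTop (2 * k)))
        rw [frequently_atTop] at hcomb ⊢
        intro M'
        obtain ⟨n, hn, hfn, harith, h2k⟩ := hcomb (max (k * M') (2 * k))
        have hkM : k * M' ≤ n := le_trans (le_max_left _ _) hn
        refine ⟨n / k, (Nat.le_div_iff_mul_le (by omega)).2 (by rw [Nat.mul_comm]; exact hkM), ?_⟩
        set m := n / k with hm
        have hkm : k * m ≤ n := by rw [hm, Nat.mul_comm]; exact Nat.div_mul_le_self n k
        have hm2 : 2 ≤ m := (Nat.le_div_iff_mul_le (by omega)).2 h2k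
        have hn2 : 2 ≤ n := le_trans (by omega : 2 ≤ 2 * k) h2k
        have hlogn : 0 < Real.log n := Real.log_pos (by exact_mod_cast hn2)
        have hlogm : 0 < Real.log m := Real.log_pos (by exact_mod_cast hm2)
        have hnlt : n < k * m + k := by
          rw [hm]
          have h1 := Nat.div_add_mod n k
          have h2 := Nat.mod_lt n (show 0 < k by omega)
          omega
        have hmge : (n : ℝ) / (2 * k) ≤ (m : ℝ) := by
          have hk' : (0 : ℝ) < k := by exact_mod_cast (show 0 < k by omega)
          rw [div_le_iff₀ (by linarith)]
          have hc1 : (n : ℝ) < k * m + k := by exact_mod_cast hnlt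
          have hc2 : (1 : ℝ) ≤ m := by exact_mod_cast (show 1 ≤ m by omega)
          nlinarith
        have hlogdiff : Real.log n - Real.log (2 * (k : ℝ)) ≤ Real.log m := by
          have h1 : Real.log ((n : ℝ) / (2 * k)) ≤ Real.log m :=
            Real.log_le_log (by positivity) hmge
          rwa [Real.log_div (by positivity) (by positivity)] at h1
        have han : a n ≤ (L + ε / 2) * Real.log n := (div_le_iff₀ hlogn).1 (le_of_lt hfn)
        have hchain : b m ≤ (L + ε) * Real.log m := by
          have h1 : b m ≤ a (k * m) := hbak m
          have h2 : a (k * m) ≤ a n := hmono hkm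
          have h3 : (L + ε / 2) * Real.log n ≤
              (L + ε) * (Real.log n - Real.log (2 * (k : ℝ))) := by nlinarith
          have h4 : (L + ε) * (Real.log n - Real.log (2 * (k : ℝ))) ≤ (L + ε) * Real.log m :=
            mul_le_mul_of_nonneg_left hlogdiff (by linarith)
          linarith
        exact (div_le_iff₀ hlogm).2 hchain
      have hcbg : IsCoboundedUnder (· ≥ ·) atTop (fun n : ℕ => b n / Real.log n) :=
        IsCoboundedUnder.of_frequently_le (hfreq' 1 one_pos)
      apply le_antisymm
      · exact myle_of_forall_pos_le_add fun ε hε =>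
          liminf_le_of_frequently_le (hfreq' ε hε) hbddg
      · exact liminf_le_liminf (Eventually.of_forall hfg) hbddf hcbg
  · -- limsup
    by_cases hB : IsBoundedUnder (· ≤ ·) atTop (fun n : ℕ => a n / Real.log n)
    · set L := limsup (fun n : ℕ => a n / Real.log n) atTop with hLdef
      have hcbf : IsCoboundedUnder (· ≤ ·) atTop (fun n : ℕ => a n / Real.log n) :=
        isCoboundedUnder_le_of_le atTop hf0
      have hcbg : IsCoboundedUnder (· ≤ ·) atTop (fun n : ℕ => b n / Real.log n) :=
        isCoboundedUnder_le_of_le atTop hg0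
      have hL0 : 0 ≤ L :=
        le_limsup_of_frequently_le ((Eventually.of_forall hf0).frequently) hB
      have hev' : ∀ ε : ℝ, 0 < ε → ∀ᶠ n in atTop, b n / Real.log n ≤ L + ε := by
        intro ε hε
        have hev : ∀ᶠ n in atTop, a n / Real.log n < L + ε / 2 :=
          eventually_lt_of_limsup_lt (by linarith) hB
        have hkt : Tendsto (fun n : ℕ => k * n) atTop atTop :=
          tendsto_atTop_mono (fun n => Nat.le_mul_of_pos_left n (by omega)) tendsto_id
        have hevk : ∀ᶠ n : ℕ in atTop, a (k * n) / Real.log (k * n : ℕ) < L + ε / 2 :=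
          hkt.eventually hev
        have hev1 : ∀ᶠ n : ℕ in atTop,
            (L + ε / 2) * Real.log (k : ℝ) ≤ (ε / 2) * Real.log n := by
          filter_upwards [hklog.eventually_ge_atTop
            ((L + ε / 2) * Real.log (k : ℝ) / (ε / 2))] with n hn
          have h2 : (ε / 2) * ((L + ε / 2) * Real.log (k : ℝ) / (ε / 2)) ≤
              (ε / 2) * Real.log n := mul_le_mul_of_nonneg_left hn (by linarith)
          rwa [mul_comm (ε / 2), div_mul_cancel₀ _ (by linarith : ε / 2 ≠ 0)] at h2
        filter_upwards [hevk, hev1, eventually_ge_atTop 2] with n hfkn harith hn2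
        have hlogn : 0 < Real.log n := Real.log_pos (by exact_mod_cast hn2)
        have hkn2 : 2 ≤ k * n := le_trans hn2 (Nat.le_mul_of_pos_left n (by omega))
        have hlogkn : 0 < Real.log ((k * n : ℕ) : ℝ) := Real.log_pos (by exact_mod_cast hkn2)
        have hakn : a (k * n) ≤ (L + ε / 2) * Real.log ((k * n : ℕ) : ℝ) :=
          (div_le_iff₀ hlogkn).1 (le_of_lt hfkn)
        have hsplit : Real.log ((k * n : ℕ) : ℝ) = Real.log (k : ℝ) + Real.log (n : ℝ) := by
          push_cast
          rw [Real.log_mul (by exact_mod_cast (show k ≠ 0 by omega))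
            (by exact_mod_cast (show n ≠ 0 by omega))]
        have hbn : b n ≤ (L + ε) * Real.log n := by
          have h1 : b n ≤ a (k * n) := hbak n
          rw [hsplit] at hakn
          nlinarith
        exact (div_le_iff₀ hlogn).2 hbn
      have hbddg : IsBoundedUnder (· ≤ ·) atTop (fun n : ℕ => b n / Real.log n) :=
        isBoundedUnder_of_eventually_le (hev' 1 one_pos)
      apply le_antisymm
      · exact myle_of_forall_pos_le_add fun ε hε => limsup_le_of_le hcbg (hev' ε hε)
      · exact limsup_le_limsup (Eventually.of_forall hfg) hcbf hbddg
    · have hBg : ¬ IsBoundedUnder (· ≤ ·) atTop (fun n : ℕ => b n / Real.log n) := by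
        intro h
        obtain ⟨c, hc⟩ := h
        rw [eventually_map] at hc
        exact hB (isBoundedUnder_of_eventually_le (hc.mono fun n h => (hfg n).trans h))
      rw [limsup_eq, limsup_eq]
      congr 1
      ext c
      simp only [Set.mem_setOf_eq]
      constructor
      · intro h; exact absurd (isBoundedUnder_of_eventually_le h) hBg
      · intro h; exact absurd (isBoundedUnder_of_eventually_le h) hB


private lemma gball_finite {V : Type*} (G : SimpleGraph V) (hlf : G.LocallyFinite) (x : V) :
    ∀ n : ℕ, (gball G x n).Finite := by
  intro n
  induction n with
  | zero =>
    have h : gball G x 0 = {x} := by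
      ext z
      simp only [gball, Set.mem_setOf_eq, Nat.cast_zero, nonpos_iff_eq_zero,
        Set.mem_singleton_iff]
      rw [SimpleGraph.edist_eq_zero_iff]
      exact eq_comm
    rw [h]; exact Set.finite_singleton x
  | succ n ih =>
    have hsub : gball G x (n + 1) ⊆ gball G x n ∪ ⋃ y ∈ gball G x n, G.neighborSet y := by
      intro z hz
      have hz' : G.edist x z ≤ ((n + 1 : ℕ) : ℕ∞) := hz
      have hzx : G.edist z x ≤ ((n + 1 : ℕ) : ℕ∞) := by rw [SimpleGraph.edist_comm]; exact hz'
      have hne : G.edist z x ≠ ⊤ :=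
        ne_top_of_le_ne_top (ENat.coe_ne_top (n + 1)) hzx
      obtain ⟨q, hql⟩ := SimpleGraph.exists_walk_of_edist_ne_top hne
      have hlen : q.length ≤ n + 1 := by
        have h2 : (q.length : ℕ∞) ≤ ((n + 1 : ℕ) : ℕ∞) := hql ▸ hzx
        exact_mod_cast h2
      cases q with
      | nil =>
        left
        show G.edist x x ≤ _
        simp [SimpleGraph.edist_self]
      | @cons _ y _ h r =>
        right
        have hy : y ∈ gball G x n := by
          show G.edist x y ≤ (n : ℕ∞)
          rw [SimpleGraph.edist_comm]
          refine le_trans (SimpleGraph.edist_le r) ?_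
          have : r.length ≤ n := by
            have := hlen
            simp only [SimpleGraph.Walk.length_cons] at this
            omega
          exact_mod_cast this
        exact Set.mem_biUnion hy (h.symm : G.Adj y z)
    have hnb : ∀ y ∈ gball G x n, (G.neighborSet y).Finite := by
      intro y _
      have := hlf y
      exact (G.neighborSet y).toFinite
    exact (ih.union (ih.biUnion hnb)).subset hsub

private lemma edist_le_mul {V : Type*} {G G' : SimpleGraph V} {k : ℕ}
    (hk : 1 ≤ k) (hnew : ∀ y z : V, G'.Adj y z → G.edist y z ≤ k) (y z : V) :
    G.edist y z ≤ (k : ℕ∞) * G'.edist y z := by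
  have hwalk : ∀ {u w : V} (p : G'.Walk u w), G.edist u w ≤ (k : ℕ∞) * p.length := by
    intro u w p
    induction p with
    | nil => simp [SimpleGraph.edist_self]
    | @cons u v w h p ih =>
      calc G.edist u w ≤ G.edist u v + G.edist v w := SimpleGraph.edist_triangle
        _ ≤ (k : ℕ∞) + (k : ℕ∞) * p.length := add_le_add (hnew _ _ h) ih
        _ = (k : ℕ∞) * ((p.cons h).length : ℕ∞) := by
            rw [SimpleGraph.Walk.length_cons]
            push_cast
            ring
  rcases eq_or_ne (G'.edist y z) ⊤ with h | h
  · rw [h, ENat.mul_top (by exact_mod_cast (show k ≠ 0 by omega))]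
    exact le_top
  · obtain ⟨p, hp⟩ := SimpleGraph.exists_walk_of_edist_ne_top h
    rw [← hp]
    exact hwalk p


theorem scaling_dimension_stable_under_local_edge_insertion {V : Type*}
    (G G' : SimpleGraph V) (hlf : G.LocallyFinite) (k : ℕ) (hk : 1 ≤ k)
    (hle : G ≤ G') (hnew : ∀ y z : V, G'.Adj y z → G.edist y z ≤ k) (x : V) :
    Filter.liminf (fun n : ℕ => Real.log (gball G' x n).ncard / Real.log n) Filter.atTop =
      Filter.liminf (fun n : ℕ => Real.log (gball G x n).ncard / Real.log n) Filter.atTop ∧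
    Filter.limsup (fun n : ℕ => Real.log (gball G' x n).ncard / Real.log n) Filter.atTop =
      Filter.limsup (fun n : ℕ => Real.log (gball G x n).ncard / Real.log n) Filter.atTop := by
  have hfin : ∀ n : ℕ, (gball G x n).Finite := gball_finite G hlf x
  have hsub1 : ∀ n : ℕ, gball G x n ⊆ gball G' x n := fun n z hz =>
    le_trans (SimpleGraph.edist_anti hle) hz
  have hsub2 : ∀ n : ℕ, gball G' x n ⊆ gball G x (k * n) := by
    intro n z hz
    refine le_trans (edist_le_mul hk hnew x z) ?_
    refine le_trans (mul_le_mul_right hz _) (le_of_eq ?_)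
    rw [← Nat.cast_mul]
  have hfin' : ∀ n : ℕ, (gball G' x n).Finite := fun n => (hfin (k * n)).subset (hsub2 n)
  have hmem : ∀ n : ℕ, x ∈ gball G x n := by
    intro n
    show G.edist x x ≤ _
    simp [SimpleGraph.edist_self]
  have hcard : ∀ n : ℕ, 1 ≤ (gball G x n).ncard := fun n =>
    (Set.ncard_pos (hfin n)).2 ⟨x, hmem n⟩
  have hballmono : ∀ {m n : ℕ}, m ≤ n → gball G x m ⊆ gball G x n := by
    intro m n hmn z hz
    show G.edist x z ≤ (n : ℕ∞)
    exact le_trans hz (Nat.cast_le.2 hmn)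
  have ha0 : ∀ n : ℕ, 0 ≤ Real.log ((gball G x n).ncard : ℝ) := fun n =>
    Real.log_nonneg (by exact_mod_cast hcard n)
  have hmono : Monotone (fun n : ℕ => Real.log ((gball G x n).ncard : ℝ)) := by
    intro m n hmn
    have h1 : (gball G x m).ncard ≤ (gball G x n).ncard :=
      Set.ncard_le_ncard (hballmono hmn) (hfin n)
    exact Real.log_le_log (by exact_mod_cast hcard m) (by exact_mod_cast h1)
  have hab : ∀ n : ℕ,
      Real.log ((gball G x n).ncard : ℝ) ≤ Real.log ((gball G' x n).ncard : ℝ) := by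
    intro n
    have h1 : (gball G x n).ncard ≤ (gball G' x n).ncard :=
      Set.ncard_le_ncard (hsub1 n) (hfin' n)
    exact Real.log_le_log (by exact_mod_cast hcard n) (by exact_mod_cast h1)
  have hbak : ∀ n : ℕ,
      Real.log ((gball G' x n).ncard : ℝ) ≤ Real.log ((gball G x (k * n)).ncard : ℝ) := by
    intro n
    have h0 : 1 ≤ (gball G' x n).ncard :=
      (Set.ncard_pos (hfin' n)).2 ⟨x, hsub1 n (hmem n)⟩
    have h1 : (gball G' x n).ncard ≤ (gball G x (k * n)).ncard :=
      Set.ncard_le_ncard (hsub2 n) (hfin (k * n))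
    exact Real.log_le_log (by exact_mod_cast h0) (by exact_mod_cast h1)
  exact scaling_key (fun n => Real.log ((gball G x n).ncard : ℝ))
    (fun n => Real.log ((gball G' x n).ncard : ℝ)) k hk ha0 hmono hab hbak
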